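/- Let a₁ ≠ 0, a₂ ≠ 0, γ₁ ≠ 0 be real and ζ real. Write the Q₊ equation in solved form u_{1,1} = F(u_{0,0}, u_{0,1}, u_{1,0}). Then the Wronskian condition W_{(u_{0,1})}[F_{,u_{1,0}}, F_{,u_{0,0}}] = 0 holds identically (on the open set where F is defined) if and only if ζ = (a₁ + a₂)γ₁³/(4a₁³). -/

import Mathlib

set_option maxHeartbeats 4000000

/-- Coefficient of `u₁₁` in the Q₊ equation (x = u₀₀, y = u₀₁, z = u₁₀). -/
noncomputable def qPlusA (a₁ a₂ γ₁ ζ x y z : ℝ) : ℝ :=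
  ζ * x * z * y + a₁ + γ₁ * x + ((a₁ + a₂) * γ₁ / (2 * a₁)) * (z + y)
    + ((a₁ + 2 * a₂) * γ₁^2 / (4 * a₁^2)) * z * y
    + ((2 * a₁ + a₂) * γ₁^2 / (4 * a₁^2)) * (z + y) * x

/-- The part of the Q₊ equation not containing `u₁₁` (x = u₀₀, y = u₀₁, z = u₁₀). -/
noncomputable def qPlusB (a₁ a₂ γ₁ x y z : ℝ) : ℝ :=
  a₁ * x + a₂ * (z + y) + (a₂ * γ₁ / a₁) * z * y
    + ((a₁ + a₂) * γ₁ / (2 * a₁)) * (x * y + x * z)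
    + ((a₁ + 2 * a₂) * γ₁^2 / (4 * a₁^2)) * x * z * y

/- partial derivatives of qPlusA and qPlusB -/
noncomputable def dAx (a₁ a₂ γ₁ ζ y z : ℝ) : ℝ :=
  ζ * z * y + γ₁ + (2*a₁+a₂)*γ₁^2/(4*a₁^2)*(z+y)
noncomputable def dAy (a₁ a₂ γ₁ ζ x z : ℝ) : ℝ :=
  ζ * x * z + (a₁+a₂)*γ₁/(2*a₁) + (a₁+2*a₂)*γ₁^2/(4*a₁^2)*z + (2*a₁+a₂)*γ₁^2/(4*a₁^2)*x
noncomputable def dAz (a₁ a₂ γ₁ ζ x y : ℝ) : ℝ :=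
  ζ * x * y + (a₁+a₂)*γ₁/(2*a₁) + (a₁+2*a₂)*γ₁^2/(4*a₁^2)*y + (2*a₁+a₂)*γ₁^2/(4*a₁^2)*x
noncomputable def dBx (a₁ a₂ γ₁ y z : ℝ) : ℝ :=
  a₁ + (a₁+a₂)*γ₁/(2*a₁)*(y+z) + (a₁+2*a₂)*γ₁^2/(4*a₁^2)*z*y
noncomputable def dBy (a₁ a₂ γ₁ x z : ℝ) : ℝ :=
  a₂ + a₂*γ₁/a₁*z + (a₁+a₂)*γ₁/(2*a₁)*x + (a₁+2*a₂)*γ₁^2/(4*a₁^2)*x*z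
noncomputable def dBz (a₁ a₂ γ₁ x y : ℝ) : ℝ :=
  a₂ + a₂*γ₁/a₁*y + (a₁+a₂)*γ₁/(2*a₁)*x + (a₁+2*a₂)*γ₁^2/(4*a₁^2)*x*y
noncomputable def dAxy (a₁ a₂ γ₁ ζ z : ℝ) : ℝ := ζ*z + (2*a₁+a₂)*γ₁^2/(4*a₁^2)
noncomputable def dAzy (a₁ a₂ γ₁ ζ x : ℝ) : ℝ := ζ*x + (a₁+2*a₂)*γ₁^2/(4*a₁^2)
noncomputable def dBxy (a₁ a₂ γ₁ z : ℝ) : ℝ := (a₁+a₂)*γ₁/(2*a₁) + (a₁+2*a₂)*γ₁^2/(4*a₁^2)*z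
noncomputable def dBzy (a₁ a₂ γ₁ x : ℝ) : ℝ := a₂*γ₁/a₁ + (a₁+2*a₂)*γ₁^2/(4*a₁^2)*x

private lemma affineHDA (c0 c1 t : ℝ) : HasDerivAt (fun s : ℝ => c0 + c1 * s) c1 t := by
  simpa using ((hasDerivAt_id t).const_mul c1).const_add c0

lemma hdA_x (a₁ a₂ γ₁ ζ x y z : ℝ) :
    HasDerivAt (fun t => qPlusA a₁ a₂ γ₁ ζ t y z) (dAx a₁ a₂ γ₁ ζ y z) x := by
  have h : (fun t => qPlusA a₁ a₂ γ₁ ζ t y z)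
      = fun t => qPlusA a₁ a₂ γ₁ ζ 0 y z + dAx a₁ a₂ γ₁ ζ y z * t := by
    funext t; simp only [qPlusA, dAx]; ring
  rw [h]; exact affineHDA _ _ _

lemma hdA_y (a₁ a₂ γ₁ ζ x y z : ℝ) :
    HasDerivAt (fun s => qPlusA a₁ a₂ γ₁ ζ x s z) (dAy a₁ a₂ γ₁ ζ x z) y := by
  have h : (fun s => qPlusA a₁ a₂ γ₁ ζ x s z)
      = fun s => qPlusA a₁ a₂ γ₁ ζ x 0 z + dAy a₁ a₂ γ₁ ζ x z * s := by
    funext s; simp only [qPlusA, dAy]; ring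
  rw [h]; exact affineHDA _ _ _

lemma hdA_z (a₁ a₂ γ₁ ζ x y z : ℝ) :
    HasDerivAt (fun t => qPlusA a₁ a₂ γ₁ ζ x y t) (dAz a₁ a₂ γ₁ ζ x y) z := by
  have h : (fun t => qPlusA a₁ a₂ γ₁ ζ x y t)
      = fun t => qPlusA a₁ a₂ γ₁ ζ x y 0 + dAz a₁ a₂ γ₁ ζ x y * t := by
    funext t; simp only [qPlusA, dAz]; ring
  rw [h]; exact affineHDA _ _ _

lemma hdB_x (a₁ a₂ γ₁ x y z : ℝ) :
    HasDerivAt (fun t => qPlusB a₁ a₂ γ₁ t y z) (dBx a₁ a₂ γ₁ y z) x := by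
  have h : (fun t => qPlusB a₁ a₂ γ₁ t y z)
      = fun t => qPlusB a₁ a₂ γ₁ 0 y z + dBx a₁ a₂ γ₁ y z * t := by
    funext t; simp only [qPlusB, dBx]; ring
  rw [h]; exact affineHDA _ _ _

lemma hdB_y (a₁ a₂ γ₁ x y z : ℝ) :
    HasDerivAt (fun s => qPlusB a₁ a₂ γ₁ x s z) (dBy a₁ a₂ γ₁ x z) y := by
  have h : (fun s => qPlusB a₁ a₂ γ₁ x s z)
      = fun s => qPlusB a₁ a₂ γ₁ x 0 z + dBy a₁ a₂ γ₁ x z * s := by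
    funext s; simp only [qPlusB, dBy]; ring
  rw [h]; exact affineHDA _ _ _

lemma hdB_z (a₁ a₂ γ₁ x y z : ℝ) :
    HasDerivAt (fun t => qPlusB a₁ a₂ γ₁ x y t) (dBz a₁ a₂ γ₁ x y) z := by
  have h : (fun t => qPlusB a₁ a₂ γ₁ x y t)
      = fun t => qPlusB a₁ a₂ γ₁ x y 0 + dBz a₁ a₂ γ₁ x y * t := by
    funext t; simp only [qPlusB, dBz]; ring
  rw [h]; exact affineHDA _ _ _

lemma hdAx_y (a₁ a₂ γ₁ ζ y z : ℝ) :
    HasDerivAt (fun s => dAx a₁ a₂ γ₁ ζ s z) (dAxy a₁ a₂ γ₁ ζ z) y := by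
  have h : (fun s => dAx a₁ a₂ γ₁ ζ s z)
      = fun s => dAx a₁ a₂ γ₁ ζ 0 z + dAxy a₁ a₂ γ₁ ζ z * s := by
    funext s; simp only [dAx, dAxy]; ring
  rw [h]; exact affineHDA _ _ _

lemma hdAz_y (a₁ a₂ γ₁ ζ x y : ℝ) :
    HasDerivAt (fun s => dAz a₁ a₂ γ₁ ζ x s) (dAzy a₁ a₂ γ₁ ζ x) y := by
  have h : (fun s => dAz a₁ a₂ γ₁ ζ x s)
      = fun s => dAz a₁ a₂ γ₁ ζ x 0 + dAzy a₁ a₂ γ₁ ζ x * s := by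
    funext s; simp only [dAz, dAzy]; ring
  rw [h]; exact affineHDA _ _ _

lemma hdBx_y (a₁ a₂ γ₁ y z : ℝ) :
    HasDerivAt (fun s => dBx a₁ a₂ γ₁ s z) (dBxy a₁ a₂ γ₁ z) y := by
  have h : (fun s => dBx a₁ a₂ γ₁ s z)
      = fun s => dBx a₁ a₂ γ₁ 0 z + dBxy a₁ a₂ γ₁ z * s := by
    funext s; simp only [dBx, dBxy]; ring
  rw [h]; exact affineHDA _ _ _

lemma hdBz_y (a₁ a₂ γ₁ x y : ℝ) :
    HasDerivAt (fun s => dBz a₁ a₂ γ₁ x s) (dBzy a₁ a₂ γ₁ x) y := by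
  have h : (fun s => dBz a₁ a₂ γ₁ x s)
      = fun s => dBz a₁ a₂ γ₁ x 0 + dBzy a₁ a₂ γ₁ x * s := by
    funext s; simp only [dBz, dBzy]; ring
  rw [h]; exact affineHDA _ _ _

section derivs
variable (a₁ a₂ γ₁ ζ : ℝ) (F : ℝ → ℝ → ℝ → ℝ)
variable (hF : ∀ x y z : ℝ, F x y z = -qPlusB a₁ a₂ γ₁ x y z / qPlusA a₁ a₂ γ₁ ζ x y z)

include hF in
lemma derivZ (x y z : ℝ) (hA : qPlusA a₁ a₂ γ₁ ζ x y z ≠ 0) :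
    deriv (fun t => F x y t) z
      = (qPlusB a₁ a₂ γ₁ x y z * dAz a₁ a₂ γ₁ ζ x y
          - dBz a₁ a₂ γ₁ x y * qPlusA a₁ a₂ γ₁ ζ x y z) / (qPlusA a₁ a₂ γ₁ ζ x y z)^2 := by
  have H := ((hdB_z a₁ a₂ γ₁ x y z).neg.div (hdA_z a₁ a₂ γ₁ ζ x y z) hA)
  have hfun : (fun t => F x y t)
      = fun t => -qPlusB a₁ a₂ γ₁ x y t / qPlusA a₁ a₂ γ₁ ζ x y t := funext fun t => hF x y t
  rw [hfun]; refine H.deriv.trans ?_; simp only [Pi.neg_apply]; ring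

include hF in
lemma derivX (x y z : ℝ) (hA : qPlusA a₁ a₂ γ₁ ζ x y z ≠ 0) :
    deriv (fun t => F t y z) x
      = (qPlusB a₁ a₂ γ₁ x y z * dAx a₁ a₂ γ₁ ζ y z
          - dBx a₁ a₂ γ₁ y z * qPlusA a₁ a₂ γ₁ ζ x y z) / (qPlusA a₁ a₂ γ₁ ζ x y z)^2 := by
  have H := ((hdB_x a₁ a₂ γ₁ x y z).neg.div (hdA_x a₁ a₂ γ₁ ζ x y z) hA)
  have hfun : (fun t => F t y z)
      = fun t => -qPlusB a₁ a₂ γ₁ t y z / qPlusA a₁ a₂ γ₁ ζ t y z := funext fun t => hF t y z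
  rw [hfun]; refine H.deriv.trans ?_; simp only [Pi.neg_apply]; ring

include hF in
lemma derivMX (x y z : ℝ) (hA : qPlusA a₁ a₂ γ₁ ζ x y z ≠ 0) :
    deriv (fun s => deriv (fun t => F t s z) x) y
      = ((dBy a₁ a₂ γ₁ x z * dAx a₁ a₂ γ₁ ζ y z + qPlusB a₁ a₂ γ₁ x y z * dAxy a₁ a₂ γ₁ ζ z
          - dBxy a₁ a₂ γ₁ z * qPlusA a₁ a₂ γ₁ ζ x y z - dBx a₁ a₂ γ₁ y z * dAy a₁ a₂ γ₁ ζ x z)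
            * qPlusA a₁ a₂ γ₁ ζ x y z
          - 2 * (qPlusB a₁ a₂ γ₁ x y z * dAx a₁ a₂ γ₁ ζ y z
              - dBx a₁ a₂ γ₁ y z * qPlusA a₁ a₂ γ₁ ζ x y z) * dAy a₁ a₂ γ₁ ζ x z)
        / (qPlusA a₁ a₂ γ₁ ζ x y z)^3 := by
  have hc : ContinuousAt (fun s => qPlusA a₁ a₂ γ₁ ζ x s z) y := by
    unfold qPlusA; fun_prop
  have heq : (fun s => deriv (fun t => F t s z) x) =ᶠ[nhds y]
      fun s => (qPlusB a₁ a₂ γ₁ x s z * dAx a₁ a₂ γ₁ ζ s z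
          - dBx a₁ a₂ γ₁ s z * qPlusA a₁ a₂ γ₁ ζ x s z) / (qPlusA a₁ a₂ γ₁ ζ x s z)^2 := by
    filter_upwards [hc.eventually_ne hA] with s hs
    exact derivX a₁ a₂ γ₁ ζ F hF x s z hs
  rw [heq.deriv_eq]
  have hN : HasDerivAt (fun s => qPlusB a₁ a₂ γ₁ x s z * dAx a₁ a₂ γ₁ ζ s z
      - dBx a₁ a₂ γ₁ s z * qPlusA a₁ a₂ γ₁ ζ x s z)
      ((dBy a₁ a₂ γ₁ x z * dAx a₁ a₂ γ₁ ζ y z + qPlusB a₁ a₂ γ₁ x y z * dAxy a₁ a₂ γ₁ ζ z)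
        - (dBxy a₁ a₂ γ₁ z * qPlusA a₁ a₂ γ₁ ζ x y z + dBx a₁ a₂ γ₁ y z * dAy a₁ a₂ γ₁ ζ x z)) y :=
    ((hdB_y a₁ a₂ γ₁ x y z).mul (hdAx_y a₁ a₂ γ₁ ζ y z)).sub
      ((hdBx_y a₁ a₂ γ₁ y z).mul (hdA_y a₁ a₂ γ₁ ζ x y z))
  have hD := (hdA_y a₁ a₂ γ₁ ζ x y z).pow 2
  refine (hN.div hD (pow_ne_zero 2 hA)).deriv.trans ?_
  simp only [Pi.pow_apply]
  rw [div_eq_div_iff (pow_ne_zero 2 (pow_ne_zero 2 hA)) (pow_ne_zero 3 hA)]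
  ring

include hF in
lemma derivMZ (x y z : ℝ) (hA : qPlusA a₁ a₂ γ₁ ζ x y z ≠ 0) :
    deriv (fun s => deriv (fun t => F x s t) z) y
      = ((dBy a₁ a₂ γ₁ x z * dAz a₁ a₂ γ₁ ζ x y + qPlusB a₁ a₂ γ₁ x y z * dAzy a₁ a₂ γ₁ ζ x
          - dBzy a₁ a₂ γ₁ x * qPlusA a₁ a₂ γ₁ ζ x y z - dBz a₁ a₂ γ₁ x y * dAy a₁ a₂ γ₁ ζ x z)
            * qPlusA a₁ a₂ γ₁ ζ x y z
          - 2 * (qPlusB a₁ a₂ γ₁ x y z * dAz a₁ a₂ γ₁ ζ x y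
              - dBz a₁ a₂ γ₁ x y * qPlusA a₁ a₂ γ₁ ζ x y z) * dAy a₁ a₂ γ₁ ζ x z)
        / (qPlusA a₁ a₂ γ₁ ζ x y z)^3 := by
  have hc : ContinuousAt (fun s => qPlusA a₁ a₂ γ₁ ζ x s z) y := by
    unfold qPlusA; fun_prop
  have heq : (fun s => deriv (fun t => F x s t) z) =ᶠ[nhds y]
      fun s => (qPlusB a₁ a₂ γ₁ x s z * dAz a₁ a₂ γ₁ ζ x s
          - dBz a₁ a₂ γ₁ x s * qPlusA a₁ a₂ γ₁ ζ x s z) / (qPlusA a₁ a₂ γ₁ ζ x s z)^2 := by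
    filter_upwards [hc.eventually_ne hA] with s hs
    exact derivZ a₁ a₂ γ₁ ζ F hF x s z hs
  rw [heq.deriv_eq]
  have hN : HasDerivAt (fun s => qPlusB a₁ a₂ γ₁ x s z * dAz a₁ a₂ γ₁ ζ x s
      - dBz a₁ a₂ γ₁ x s * qPlusA a₁ a₂ γ₁ ζ x s z)
      ((dBy a₁ a₂ γ₁ x z * dAz a₁ a₂ γ₁ ζ x y + qPlusB a₁ a₂ γ₁ x y z * dAzy a₁ a₂ γ₁ ζ x)
        - (dBzy a₁ a₂ γ₁ x * qPlusA a₁ a₂ γ₁ ζ x y z + dBz a₁ a₂ γ₁ x y * dAy a₁ a₂ γ₁ ζ x z)) y :=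
    ((hdB_y a₁ a₂ γ₁ x y z).mul (hdAz_y a₁ a₂ γ₁ ζ x y)).sub
      ((hdBz_y a₁ a₂ γ₁ x y).mul (hdA_y a₁ a₂ γ₁ ζ x y z))
  have hD := (hdA_y a₁ a₂ γ₁ ζ x y z).pow 2
  refine (hN.div hD (pow_ne_zero 2 hA)).deriv.trans ?_
  simp only [Pi.pow_apply]
  rw [div_eq_div_iff (pow_ne_zero 2 (pow_ne_zero 2 hA)) (pow_ne_zero 3 hA)]
  ring

end derivs

theorem stmt16 (a₁ a₂ γ₁ ζ : ℝ) (ha₁ : a₁ ≠ 0) (ha₂ : a₂ ≠ 0) (hγ : γ₁ ≠ 0)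
    (F : ℝ → ℝ → ℝ → ℝ)
    (hF : ∀ x y z : ℝ, F x y z = -qPlusB a₁ a₂ γ₁ x y z / qPlusA a₁ a₂ γ₁ ζ x y z) :
    (∀ x y z : ℝ, qPlusA a₁ a₂ γ₁ ζ x y z ≠ 0 →
      (deriv (fun t => F x y t) z)
          * deriv (fun s => deriv (fun t => F t s z) x) y
        - (deriv (fun t => F t y z) x)
          * deriv (fun s => deriv (fun t => F x s t) z) y = 0)
    ↔ ζ = (a₁ + a₂) * γ₁^3 / (4 * a₁^3) := by
  constructor
  · intro h
    have hzor : qPlusA a₁ a₂ γ₁ ζ 0 0 1 ≠ 0 ∨ qPlusA a₁ a₂ γ₁ ζ 0 0 (-1) ≠ 0 := by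
      by_contra hc
      push_neg at hc
      obtain ⟨h1, h2⟩ := hc
      apply ha₁
      have e1 : a₁ + (a₁ + a₂) * γ₁ / (2 * a₁) = 0 := by rw [← h1]; simp only [qPlusA]; ring
      have e2 : a₁ - (a₁ + a₂) * γ₁ / (2 * a₁) = 0 := by rw [← h2]; simp only [qPlusA]; ring
      linarith
    have key : (a₁ + a₂) * γ₁ ^ 3 - 4 * a₁ ^ 3 * ζ = 0 := by
      rcases hzor with hz | hz
      · have hw := h 0 0 1 hz
        rw [derivZ a₁ a₂ γ₁ ζ F hF 0 0 1 hz, derivX a₁ a₂ γ₁ ζ F hF 0 0 1 hz,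
          derivMX a₁ a₂ γ₁ ζ F hF 0 0 1 hz, derivMZ a₁ a₂ γ₁ ζ F hF 0 0 1 hz,
          div_mul_div_comm, div_mul_div_comm, div_sub_div_same, div_eq_zero_iff] at hw
        rcases hw with hw | hw
        · have h2 : 2 * a₁ ^ 2 + (a₁ + a₂) * γ₁ ≠ 0 := by
            intro h0
            apply hz
            have e : qPlusA a₁ a₂ γ₁ ζ 0 0 1 = (2 * a₁ ^ 2 + (a₁ + a₂) * γ₁) / (2 * a₁) := by
              simp only [qPlusA]; field_simp; ring
            rw [e, h0, zero_div]
          simp only [qPlusA, qPlusB, dAx, dAy, dAz, dBx, dBy, dBz, dAxy, dAzy, dBxy, dBzy] at hw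
          field_simp at hw
          have hfac : ((2 * a₁ ^ 2 + (a₁ + a₂) * γ₁) * ((a₁ + a₂) * γ₁ ^ 3 - 4 * a₁ ^ 3 * ζ))
              * (4096 * a₁ ^ 7 * a₂ ^ 2) = 0 := by linear_combination hw
          have hbig : (4096 : ℝ) * a₁ ^ 7 * a₂ ^ 2 ≠ 0 :=
            mul_ne_zero (mul_ne_zero (by norm_num) (pow_ne_zero _ ha₁)) (pow_ne_zero _ ha₂)
          rcases mul_eq_zero.mp hfac with h' | h'
          · rcases mul_eq_zero.mp h' with h'' | h''
            · exact absurd h'' h2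
            · exact h''
          · exact absurd h' hbig
        · exact absurd hw (mul_ne_zero (pow_ne_zero 2 hz) (pow_ne_zero 3 hz))
      · have hw := h 0 0 (-1) hz
        rw [derivZ a₁ a₂ γ₁ ζ F hF 0 0 (-1) hz, derivX a₁ a₂ γ₁ ζ F hF 0 0 (-1) hz,
          derivMX a₁ a₂ γ₁ ζ F hF 0 0 (-1) hz, derivMZ a₁ a₂ γ₁ ζ F hF 0 0 (-1) hz,
          div_mul_div_comm, div_mul_div_comm, div_sub_div_same, div_eq_zero_iff] at hw
        rcases hw with hw | hw
        · have h2 : 2 * a₁ ^ 2 - (a₁ + a₂) * γ₁ ≠ 0 := by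
            intro h0
            apply hz
            have e : qPlusA a₁ a₂ γ₁ ζ 0 0 (-1) = (2 * a₁ ^ 2 - (a₁ + a₂) * γ₁) / (2 * a₁) := by
              simp only [qPlusA]; field_simp; ring
            rw [e, h0, zero_div]
          simp only [qPlusA, qPlusB, dAx, dAy, dAz, dBx, dBy, dBz, dAxy, dAzy, dBxy, dBzy] at hw
          field_simp at hw
          have hfac : ((2 * a₁ ^ 2 - (a₁ + a₂) * γ₁) * ((a₁ + a₂) * γ₁ ^ 3 - 4 * a₁ ^ 3 * ζ))
              * (4096 * a₁ ^ 7 * a₂ ^ 2) = 0 := by linear_combination hw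
          have hbig : (4096 : ℝ) * a₁ ^ 7 * a₂ ^ 2 ≠ 0 :=
            mul_ne_zero (mul_ne_zero (by norm_num) (pow_ne_zero _ ha₁)) (pow_ne_zero _ ha₂)
          rcases mul_eq_zero.mp hfac with h' | h'
          · rcases mul_eq_zero.mp h' with h'' | h''
            · exact absurd h'' h2
            · exact h''
          · exact absurd h' hbig
        · exact absurd hw (mul_ne_zero (pow_ne_zero 2 hz) (pow_ne_zero 3 hz))
    have h4 : (4 : ℝ) * a₁ ^ 3 ≠ 0 := mul_ne_zero (by norm_num) (pow_ne_zero _ ha₁)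
    rw [eq_div_iff h4]
    linear_combination -key
  · intro hζ x y z hA
    rw [derivZ a₁ a₂ γ₁ ζ F hF x y z hA, derivX a₁ a₂ γ₁ ζ F hF x y z hA,
      derivMX a₁ a₂ γ₁ ζ F hF x y z hA, derivMZ a₁ a₂ γ₁ ζ F hF x y z hA,
      div_mul_div_comm, div_mul_div_comm, div_sub_div_same, div_eq_zero_iff]
    left
    subst hζ
    simp only [qPlusA, qPlusB, dAx, dAy, dAz, dBx, dBy, dBz, dAxy, dAzy, dBxy, dBzy]
    field_simp
    ring
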